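/- For every probabilistic transition system ⟨S, π⟩ and every discount factor δ ∈ (0,1], two states s₁, s₂ ∈ S satisfy d_δ(s₁,s₂) = 0 if and only if s₁ and s₂ are probabilistic bisimilar. -/

import Mathlib

open scoped Classical
open Finset

/-- A probabilistic transition system on a finite state set `S`:
`prob s s'` is the probability of a transition from `s` to `s'`;
each row sums to `0` or `1`. -/
structure PTS (S : Type) [Fintype S] where
  prob : S → S → ℝ
  nonneg : ∀ s s', 0 ≤ prob s s'
  le_one : ∀ s s', prob s s' ≤ 1
  sum01 : ∀ s, (∑ s', prob s s') = 0 ∨ (∑ s', prob s s') = 1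

/-- The logic `L`: `true`, diamond, conjunction, negation and `φ ⊖ q` with `q ∈ [0,1] ∩ ℚ`. -/
inductive Formula : Type where
  | tt : Formula
  | diam : Formula → Formula
  | conj : Formula → Formula → Formula
  | neg : Formula → Formula
  | sub : Formula → {q : ℚ // 0 ≤ q ∧ q ≤ 1} → Formula

variable {S : Type} [Fintype S]

/-- The real-valued interpretation `⟦φ⟧_δ` of a formula. -/
noncomputable def interp (M : PTS S) (δ : ℝ) : Formula → S → ℝ
  | .tt, _ => 1
  | .diam φ, s => δ * ∑ s', M.prob s s' * interp M δ φ s'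
  | .conj φ ψ, s => min (interp M δ φ s) (interp M δ ψ s)
  | .neg φ, s => 1 - interp M δ φ s
  | .sub φ q, s => max (interp M δ φ s - ((q : ℚ) : ℝ)) 0

/-- The behavioural distance `d_δ(s₁,s₂) = sup_{φ ∈ L} ⟦φ⟧_δ(s₁) − ⟦φ⟧_δ(s₂)`. -/
noncomputable def pdist (M : PTS S) (δ : ℝ) (s₁ s₂ : S) : ℝ :=
  ⨆ φ : Formula, (interp M δ φ s₁ - interp M δ φ s₂)

/-- `d` is a 1-bounded pseudometric on `S`. -/
def IsPseudo (d : S → S → ℝ) : Prop :=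
  (∀ s₁ s₂, 0 ≤ d s₁ s₂ ∧ d s₁ s₂ ≤ 1) ∧ (∀ s, d s s = 0) ∧
  (∀ s₁ s₂, d s₁ s₂ = d s₂ s₁) ∧ (∀ s₁ s₂ s₃, d s₁ s₃ ≤ d s₁ s₂ + d s₂ s₃)

/-- The order `⊑` on 1-bounded pseudometrics: `d₁ ⊑ d₂` iff `d₁ ≥ d₂` pointwise. -/
def ple (d₁ d₂ : S → S → ℝ) : Prop := ∀ s₁ s₂, d₂ s₁ s₂ ≤ d₁ s₁ s₂

/-- `f : S → [0,1]` is nonexpansive with respect to `d`. -/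
def Nonexp (d : S → S → ℝ) (f : S → ℝ) : Prop :=
  (∀ s, 0 ≤ f s ∧ f s ≤ 1) ∧ ∀ s₁ s₂, |f s₁ - f s₂| ≤ d s₁ s₂

/-- The functional `Δ` on 1-bounded pseudometrics. -/
noncomputable def Delta (M : PTS S) (d : S → S → ℝ) (s₁ s₂ : S) : ℝ :=
  if (∑ s, M.prob s₁ s) = 1 ∧ (∑ s, M.prob s₂ s) = 1 then
    sSup {x : ℝ | ∃ f : S → ℝ, Nonexp d f ∧ x = ∑ s, f s * (M.prob s₁ s - M.prob s₂ s)}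
  else if (∑ s, M.prob s₁ s) = 0 ∧ (∑ s, M.prob s₂ s) = 0 then 0
  else 1

/-- `R` is a probabilistic bisimulation on `M`. -/
def IsBisim (M : PTS S) (R : S → S → Prop) : Prop :=
  Equivalence R ∧ ∀ s₁ s₂, R s₁ s₂ → ∀ e : S,
    (∑ s, if R e s then M.prob s₁ s else 0) = (∑ s, if R e s then M.prob s₂ s else 0)

/-- `s₁` and `s₂` are probabilistic bisimilar. -/
def Bisimilar (M : PTS S) (s₁ s₂ : S) : Prop := ∃ R, IsBisim M R ∧ R s₁ s₂

/-- The modal depth of a formula. -/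
def Formula.depth : Formula → ℕ
  | .tt => 0
  | .diam φ => φ.depth + 1
  | .conj φ ψ => max φ.depth ψ.depth
  | .neg φ => φ.depth
  | .sub φ _ => φ.depth

/-- The ratio `ρ(d₁,d₂) = min { d₂(s₁,s₂)/d₁(s₁,s₂) | d₂(s₁,s₂) > 0 }`,
with the minimum of the empty set taken to be `1`. -/
noncomputable def rho (d₁ d₂ : S → S → ℝ) : ℝ :=
  if {x : ℝ | ∃ s₁ s₂, 0 < d₂ s₁ s₂ ∧ x = d₂ s₁ s₂ / d₁ s₁ s₂}.Nonempty
  then sInf {x : ℝ | ∃ s₁ s₂, 0 < d₂ s₁ s₂ ∧ x = d₂ s₁ s₂ / d₁ s₁ s₂} else 1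

/-- `μ = min { d(s₁,s₂) | d(s₁,s₂) > 0 }`, with the minimum of the empty set taken to be `1`. -/
noncomputable def muMin (d : S → S → ℝ) : ℝ :=
  if {x : ℝ | ∃ s₁ s₂, 0 < d s₁ s₂ ∧ x = d s₁ s₂}.Nonempty
  then sInf {x : ℝ | ∃ s₁ s₂, 0 < d s₁ s₂ ∧ x = d s₁ s₂} else 1

/-- The iterates `d⁰ = ⊤`, `d^{n+1} = Δ(d^n)`. -/
noncomputable def iterd (M : PTS S) : ℕ → S → S → ℝ
  | 0 => fun _ _ => 0
  | n + 1 => Delta M (iterd M n)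

/-- The termination probabilities `τₙ`. -/
noncomputable def term (M : PTS S) : ℕ → S → ℝ
  | 0, _ => 0
  | n + 1, s => if (∑ s', M.prob s s') = 0 then 1 else ∑ s', M.prob s s' * term M n s'

instance : Nonempty Formula := ⟨.tt⟩

/-- interpretations lie in `[0,1]`. -/
lemma interp_mem (M : PTS S) {δ : ℝ} (hδ : 0 < δ ∧ δ ≤ 1) :
    ∀ (φ : Formula) (s : S), 0 ≤ interp M δ φ s ∧ interp M δ φ s ≤ 1 := by
  intro φ
  induction φ with
  | tt => intro s; simp [interp]
  | diam φ ih =>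
    intro s
    have h0 : 0 ≤ ∑ s', M.prob s s' * interp M δ φ s' :=
      Finset.sum_nonneg fun t _ => mul_nonneg (M.nonneg s t) (ih t).1
    have h1 : ∑ s', M.prob s s' * interp M δ φ s' ≤ ∑ s', M.prob s s' :=
      Finset.sum_le_sum fun t _ => by
        have h2 := (ih t).2; nlinarith [M.nonneg s t]
    have h2 : (∑ s', M.prob s s') ≤ 1 := by
      rcases M.sum01 s with h | h <;> rw [h] <;> norm_num
    refine ⟨mul_nonneg hδ.1.le h0, ?_⟩
    show δ * ∑ s', M.prob s s' * interp M δ φ s' ≤ 1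
    nlinarith [hδ.1, hδ.2]
  | conj φ ψ ihφ ihψ =>
    intro s
    exact ⟨le_min (ihφ s).1 (ihψ s).1,
      min_le_of_left_le (ihφ s).2⟩
  | neg φ ih =>
    intro s
    have := ih s; constructor <;> [skip; skip] <;> simp [interp] <;> linarith [this.1, this.2]
  | sub φ q ih =>
    intro s
    have h := ih s
    have hq := q.2
    have hq0 : (0:ℝ) ≤ (q : ℚ) := by exact_mod_cast hq.1
    constructor
    · exact le_max_right _ _
    · show max (interp M δ φ s - ((q:ℚ):ℝ)) 0 ≤ 1
      apply max_le <;> linarith [h.2]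

/-- Sums of row probabilities weighted by a class-constant function agree for
bisimilar states. -/
lemma sum_prob_mul_eq (M : PTS S) {R : S → S → Prop} (hR : IsBisim M R)
    {s₁ s₂ : S} (h : R s₁ s₂) (v : S → ℝ) (hv : ∀ a b, R a b → v a = v b) :
    ∑ s, M.prob s₁ s * v s = ∑ s, M.prob s₂ s * v s := by
  obtain ⟨heq, hb⟩ := hR
  letI st : Setoid S := ⟨R, heq⟩
  have key : ∀ u : S, ∑ s, M.prob u s * v s
      = ∑ c : Quotient st, v (Quotient.out c) *
          ∑ s, if R (Quotient.out c) s then M.prob u s else 0 := by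
    intro u
    rw [← Finset.sum_fiberwise Finset.univ (fun s => (Quotient.mk st s)) (fun s => M.prob u s * v s)]
    refine Finset.sum_congr rfl fun c _ => ?_
    have hmem : ∀ s : S, (Quotient.mk st s = c) ↔ R (Quotient.out c) s := by
      intro s
      constructor
      · intro hs
        have : Quotient.mk st (Quotient.out c) = Quotient.mk st s := by
          rw [hs, Quotient.out_eq]
        exact Quotient.exact this
      · intro hs
        have : Quotient.mk st (Quotient.out c) = Quotient.mk st s := Quotient.sound hs
        rw [← this, Quotient.out_eq]
    rw [Finset.mul_sum, Finset.sum_filter]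
    refine Finset.sum_congr rfl fun s _ => ?_
    by_cases hs : Quotient.mk st s = c
    · have h1 : R (Quotient.out c) s := (hmem s).1 hs
      rw [if_pos hs, if_pos h1, hv _ _ h1, mul_comm]
    · rw [if_neg hs, if_neg fun h1 => hs ((hmem s).2 h1), mul_zero]
  rw [key s₁, key s₂]
  refine Finset.sum_congr rfl fun c _ => ?_
  rw [hb s₁ s₂ h (Quotient.out c)]

/-- Bisimilar states satisfy the same formulas. -/
lemma interp_eq_of_bisim (M : PTS S) (δ : ℝ) {R : S → S → Prop} (hR : IsBisim M R) :
    ∀ (φ : Formula) (a b : S), R a b → interp M δ φ a = interp M δ φ b := by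
  intro φ
  induction φ with
  | tt => intro a b _; rfl
  | diam φ ih =>
    intro a b hab
    show δ * _ = δ * _
    rw [sum_prob_mul_eq M hR hab (interp M δ φ) ih]
  | conj φ ψ ihφ ihψ => intro a b hab; show min _ _ = min _ _; rw [ihφ a b hab, ihψ a b hab]
  | neg φ ih => intro a b hab; show 1 - _ = 1 - _; rw [ih a b hab]
  | sub φ q ih => intro a b hab; show max _ _ = max _ _; rw [ih a b hab]

/-- `d_δ(s₁,s₂) = 0` iff `s₁` and `s₂` are probabilistic bisimilar. -/
theorem stmt3 (S : Type) [Fintype S] (M : PTS S) (δ : ℝ) (hδ : 0 < δ ∧ δ ≤ 1)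
    (s₁ s₂ : S) :
    pdist M δ s₁ s₂ = 0 ↔ Bisimilar M s₁ s₂ := by
  constructor
  · -- pdist = 0 → bisimilar
    intro hp
    set Req : S → S → Prop := fun a b => ∀ φ : Formula, interp M δ φ a = interp M δ φ b with hReqdef
    have hequiv : Equivalence Req :=
      ⟨fun s φ => rfl, fun h φ => (h φ).symm, fun h1 h2 φ => (h1 φ).trans (h2 φ)⟩
    -- s₁ Req s₂
    have hbdd : ∀ a b : S, BddAbove (Set.range fun φ : Formula => interp M δ φ a - interp M δ φ b) := by
      intro a b
      refine ⟨1, ?_⟩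
      rintro x ⟨φ, rfl⟩
      have h1 := interp_mem M hδ φ a
      have h2 := interp_mem M hδ φ b
      simp only
      linarith [h1.2, h2.1]
    have hR12 : Req s₁ s₂ := by
      intro φ
      have hle : ∀ ψ : Formula, interp M δ ψ s₁ - interp M δ ψ s₂ ≤ 0 := by
        intro ψ
        have := le_ciSup (hbdd s₁ s₂) ψ
        rw [show (⨆ φ : Formula, (interp M δ φ s₁ - interp M δ φ s₂)) = pdist M δ s₁ s₂ from rfl, hp] at this
        exact this
      have h1 := hle φ
      have h2 := hle (.neg φ)
      have h2' : (1 - interp M δ φ s₁) - (1 - interp M δ φ s₂) ≤ 0 := h2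
      linarith
    -- Req is a bisimulation
    refine ⟨Req, ⟨hequiv, ?_⟩, hR12⟩
    intro a b hab e
    -- build a separating formula for the class of e
    have hsep : ∀ t : S, ∃ ψ : Formula, ¬ Req e t →
        (∀ s : S, 0 ≤ interp M δ ψ s) ∧ 0 < interp M δ ψ e ∧ interp M δ ψ t = 0 := by
      intro t
      by_cases ht : Req e t
      · exact ⟨.tt, fun h => absurd ht h⟩
      · simp only [hReqdef] at ht
        push_neg at ht
        obtain ⟨φ, hφ⟩ := ht
        -- wlog interp φ t < interp φ e, else take neg
        have : ∃ φ' : Formula, interp M δ φ' t < interp M δ φ' e := by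
          rcases lt_or_gt_of_ne hφ with h | h
          · exact ⟨.neg φ, by show 1 - _ < 1 - _; linarith⟩
          · exact ⟨φ, h⟩
        obtain ⟨φ', hφ'⟩ := this
        obtain ⟨q, hq1, hq2⟩ := exists_rat_btwn hφ'
        have h0t := interp_mem M hδ φ' t
        have h0e := interp_mem M hδ φ' e
        have hq0 : (0:ℚ) ≤ q := by exact_mod_cast le_of_lt (lt_of_le_of_lt h0t.1 hq1)
        have hq1' : (q:ℚ) ≤ 1 := by exact_mod_cast le_of_lt (lt_of_lt_of_le hq2 h0e.2)
        refine ⟨.sub φ' ⟨q, hq0, hq1'⟩, fun _ => ⟨fun s => le_max_right _ _, ?_, ?_⟩⟩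
        · show 0 < max (interp M δ φ' e - ((q:ℚ):ℝ)) 0
          rw [lt_max_iff]; left; push_cast; linarith
        · show max (interp M δ φ' t - ((q:ℚ):ℝ)) 0 = 0
          rw [max_eq_right]; push_cast; linarith
    choose ψf hψf using hsep
    set l : List S := (Finset.univ.filter fun t => ¬ Req e t).toList with hl
    have hlmem : ∀ t : S, t ∈ l ↔ ¬ Req e t := by
      intro t; rw [hl, Finset.mem_toList, Finset.mem_filter]
      simp
    set χ : Formula := l.foldr (fun t acc => Formula.conj (ψf t) acc) Formula.tt with hχ
    -- properties of χ by induction on lists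
    have gen : ∀ L : List S, (∀ t ∈ L, ¬ Req e t) →
        (∀ s : S, 0 ≤ interp M δ (L.foldr (fun t acc => Formula.conj (ψf t) acc) Formula.tt) s) ∧
        (0 < interp M δ (L.foldr (fun t acc => Formula.conj (ψf t) acc) Formula.tt) e) ∧
        (∀ t ∈ L, ∀ s : S, interp M δ (L.foldr (fun t acc => Formula.conj (ψf t) acc) Formula.tt) s ≤ interp M δ (ψf t) s) := by
      intro L
      induction L with
      | nil => intro _; exact ⟨fun s => by norm_num [interp], by norm_num [interp], by simp⟩
      | cons hd tl ih =>
        intro hL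
        have hhd := hψf hd (hL hd List.mem_cons_self)
        obtain ⟨ih1, ih2, ih3⟩ := ih fun t ht => hL t (List.mem_cons_of_mem hd ht)
        refine ⟨?_, ?_, ?_⟩
        · intro s; exact le_min (hhd.1 s) (ih1 s)
        · exact lt_min hhd.2.1 ih2
        · intro t ht s
          rcases List.mem_cons.1 ht with rfl | ht'
          · exact min_le_left _ _
          · exact le_trans (min_le_right _ _) (ih3 t ht' s)
    obtain ⟨hχ1, hχ2, hχ3⟩ := gen l (fun t ht => (hlmem t).1 ht)
    -- χ is 0 off the class of e, constant c on the class
    set c : ℝ := interp M δ χ e with hc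
    have hχval : ∀ s : S, interp M δ χ s = if Req e s then c else 0 := by
      intro s
      by_cases hs : Req e s
      · rw [if_pos hs, hc]; exact (hs χ).symm
      · rw [if_neg hs]
        refine le_antisymm ?_ (hχ1 s)
        have := hχ3 s ((hlmem s).2 hs) s
        rw [(hψf s hs).2.2] at this
        exact this
    -- compare via ◇χ
    have hdiam := hab (.diam χ)
    have hsum : δ * ∑ s, M.prob a s * interp M δ χ s = δ * ∑ s, M.prob b s * interp M δ χ s := hdiam
    have hsum' : ∑ s, M.prob a s * interp M δ χ s = ∑ s, M.prob b s * interp M δ χ s :=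
      mul_left_cancel₀ (ne_of_gt hδ.1) hsum
    have hrw : ∀ u : S, ∑ s, M.prob u s * interp M δ χ s
        = (∑ s, if Req e s then M.prob u s else 0) * c := by
      intro u
      rw [Finset.sum_mul]
      refine Finset.sum_congr rfl fun s _ => ?_
      rw [hχval s]
      by_cases hs : Req e s
      · rw [if_pos hs, if_pos hs]
      · rw [if_neg hs, if_neg hs, mul_zero, zero_mul]
    rw [hrw a, hrw b] at hsum'
    exact mul_right_cancel₀ (ne_of_gt hχ2) hsum'
  · -- bisimilar → pdist = 0
    rintro ⟨R, hR, h12⟩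
    have heq : ∀ φ : Formula, interp M δ φ s₁ = interp M δ φ s₂ :=
      fun φ => interp_eq_of_bisim M δ hR φ s₁ s₂ h12
    unfold pdist
    have h0 : (fun φ : Formula => interp M δ φ s₁ - interp M δ φ s₂) = fun _ => (0:ℝ) :=
      funext fun φ => by rw [heq φ]; ring
    rw [h0]
    exact ciSup_const
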